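/- Let A be a commutative unital C*-algebra and M a finitely generated projective A-module. Let β₁, …, β_k be positive definite A-hermitian inner products on M, and let a₁, …, a_k ∈ A be positive elements (0 ≤ a_i in the C*-order) with a₁ + ⋯ + a_k = 1. Then the map γ : M × M → A defined by γ(x, y) := Σ_{i=1}^k a_i · β_i(x, y) is a positive definite A-hermitian inner product on M. -/

import Mathlib

lemma HIP.pi_decomp {A : Type*} [CommSemiring A] {n : ℕ} (v : Fin n → A) :
    v = ∑ t, v t • (Pi.single t 1 : Fin n → A) := by
  funext l
  rw [Finset.sum_apply]
  simp [Pi.single_apply]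

section helpers
variable {A : Type*} [CommRing A] [StarRing A] [PartialOrder A] [StarOrderedRing A]

lemma HIP.mul_nonneg' {a b : A} (ha : 0 ≤ a) (hb : 0 ≤ b) : 0 ≤ a * b := by
  rw [StarOrderedRing.nonneg_iff] at ha
  induction ha using AddSubmonoid.closure_induction with
  | mem x hx =>
    obtain ⟨s, rfl⟩ := hx
    simpa [mul_right_comm] using star_left_conjugate_nonneg hb s
  | zero => simp
  | add x y _ _ hx hy => simpa [add_mul] using add_nonneg hx hy

end helpers

section cstar
variable {A : Type*} [NormedCommRing A] [StarRing A] [CStarRing A] [NormedAlgebra ℂ A]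
  [StarModule ℂ A] [CompleteSpace A]

omit [StarRing A] [CStarRing A] [StarModule ℂ A] in
lemma HIP.char_ker {𝔪 : Ideal A} (hm : 𝔪.IsMaximal) (b : A) :
    𝔪.toCharacterSpace b = 0 ↔ b ∈ 𝔪 := by
  refine ⟨fun h => ?_, Ideal.toCharacterSpace_apply_eq_zero_of_mem 𝔪⟩
  by_contra hb
  obtain ⟨z, i, hi, hzi⟩ := hm.exists_inv hb
  have := congrArg 𝔪.toCharacterSpace hzi
  rw [map_add, map_mul, h, mul_zero, Ideal.toCharacterSpace_apply_eq_zero_of_mem 𝔪 hi,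
    map_one, zero_add] at this
  exact zero_ne_one this

lemma HIP.star_mem_maximal {𝔪 : Ideal A} (hm : 𝔪.IsMaximal) {b : A} (hb : b ∈ 𝔪) :
    star b ∈ 𝔪 := by
  letI : CStarAlgebra A :=
    { toNormedRing := inferInstance, toStarRing := inferInstance,
      toCompleteSpace := inferInstance, toCStarRing := inferInstance,
      toNormedAlgebra := inferInstance, toStarModule := inferInstance }
  rw [← HIP.char_ker hm] at hb ⊢
  rw [map_star, hb, star_zero]

lemma HIP.char_star (𝔪 : Ideal A) [𝔪.IsMaximal] (b : A) :
    𝔪.toCharacterSpace (star b) = starRingEnd ℂ (𝔪.toCharacterSpace b) := by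
  letI : CStarAlgebra A :=
    { toNormedRing := inferInstance, toStarRing := inferInstance,
      toCompleteSpace := inferInstance, toCStarRing := inferInstance,
      toNormedAlgebra := inferInstance, toStarModule := inferInstance }
  rw [map_star, RCLike.star_def]

open ComplexOrder in
lemma HIP.char_nonneg [PartialOrder A] [StarOrderedRing A] (𝔪 : Ideal A) [𝔪.IsMaximal]
    {b : A} (hb : 0 ≤ b) : 0 ≤ 𝔪.toCharacterSpace b := by
  letI : CStarAlgebra A :=
    { toNormedRing := inferInstance, toStarRing := inferInstance,
      toCompleteSpace := inferInstance, toCStarRing := inferInstance,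
      toNormedAlgebra := inferInstance, toStarModule := inferInstance }
  exact spectrum_nonneg_of_nonneg hb (WeakDual.CharacterSpace.apply_mem_spectrum _ b)

end cstar

namespace HIP

section forms
variable {A : Type*} [CommRing A] [StarRing A]
variable {M : Type*} [AddCommGroup M] [Module A M]
variable {β : M → M → A}

/-- The bundled linear functional `y ↦ β y x`. -/
def lf (β : M → M → A)
    (hlin : ∀ (a : A) (x y z : M), β (a • x + y) z = a * β x z + β y z) (x : M) :
    M →ₗ[A] A where
  toFun y := β y x
  map_add' y z := by simpa using hlin 1 y z x
  map_smul' c y := by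
    have h0 : β (0 : M) x = 0 := by
      have := hlin 1 0 0 x
      simp only [one_smul, add_zero, one_mul] at this
      exact (left_eq_add.mp this)
    have := hlin c y 0 x
    simpa [h0] using this

variable (hlin : ∀ (a : A) (x y z : M), β (a • x + y) z = a * β x z + β y z)
variable (hsym : ∀ x y : M, β y x = star (β x y))

include hlin

lemma form_add_left (x y z : M) : β (x + y) z = β x z + β y z := by
  simpa using hlin 1 x y z

lemma form_zero_left (z : M) : β 0 z = 0 := by
  have := hlin 1 0 0 z
  simp only [one_smul, add_zero, one_mul] at this
  exact (left_eq_add.mp this)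

lemma form_smul_left (a : A) (x z : M) : β (a • x) z = a * β x z := by
  have := hlin a x 0 z
  simpa [form_zero_left hlin] using this

include hsym

lemma form_add_right (x y z : M) : β z (x + y) = β z x + β z y := by
  rw [hsym (x + y) z, form_add_left hlin, star_add, ← hsym, ← hsym]

lemma form_smul_right (a : A) (x z : M) : β z (a • x) = star a * β z x := by
  rw [hsym (a • x) z, form_smul_left hlin, star_mul', ← hsym]

lemma form_sum_right {ι : Type*} (s : Finset ι) (f : ι → M) (z : M) :
    β z (∑ t ∈ s, f t) = ∑ t ∈ s, β z (f t) := by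
  classical
  induction s using Finset.induction_on with
  | empty =>
    simp only [Finset.sum_empty]
    rw [hsym, form_zero_left hlin, star_zero]
  | insert _ _ hnot ih =>
    rw [Finset.sum_insert hnot, Finset.sum_insert hnot, form_add_right hlin hsym, ih]

/-- Values `β y z` lie in a star-closed ideal when `z ∈ 𝔪 • ⊤`. -/
lemma form_mem_of_mem_smul_top {𝔪 : Ideal A} (hstar : ∀ b ∈ 𝔪, star b ∈ 𝔪)
    {z : M} (hz : z ∈ (𝔪 • ⊤ : Submodule A M)) (y : M) : β y z ∈ 𝔪 := by
  refine Submodule.smul_induction_on hz ?_ ?_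
  · intro r hr n _
    rw [form_smul_right hlin hsym]
    exact Ideal.mul_mem_right _ _ (hstar r hr)
  · intro z₁ z₂ h₁ h₂
    rw [form_add_right hlin hsym]
    exact Ideal.add_mem _ h₁ h₂

end forms

end HIP

open ComplexOrder in
lemma HIP.fiber_mem
    {A : Type*} [NormedCommRing A] [StarRing A] [CStarRing A] [NormedAlgebra ℂ A]
    [StarModule ℂ A] [CompleteSpace A] [PartialOrder A] [StarOrderedRing A]
    {M : Type*} [AddCommGroup M] [Module A M] [Module.Finite A M] [Module.Projective A M]
    {k : ℕ} {β : Fin k → M → M → A}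
    (hlin : ∀ i (a : A) (x y z : M), β i (a • x + y) z = a * β i x z + β i y z)
    (hsym : ∀ i (x y : M), β i y x = star (β i x y))
    (hpos : ∀ i (x : M), 0 ≤ β i x x)
    (hriesz : ∀ i (φ : M →ₗ[A] A), ∃! x : M, ∀ y : M, φ y = β i y x)
    {a : Fin k → A} (ha : ∀ i, 0 ≤ a i) (hsum : ∑ i, a i = 1)
    (𝔪 : Ideal A) [hm : 𝔪.IsMaximal] (x : M)
    (hx : ∀ y, (∑ i, a i * β i y x) ∈ 𝔪) : x ∈ (𝔪 • ⊤ : Submodule A M) := by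
  classical
  set χ := 𝔪.toCharacterSpace with hχdef
  have hker : ∀ b : A, χ b = 0 ↔ b ∈ 𝔪 := HIP.char_ker hm
  have hx0 : ∀ y, ∑ i, χ (a i) * χ (β i y x) = 0 := by
    intro y
    have h1 : ∑ i, χ (a i) * χ (β i y x) = χ (∑ i, a i * β i y x) := by
      rw [map_sum]
      exact Finset.sum_congr rfl fun i _ => (map_mul χ _ _).symm
    rw [h1]
    exact (hker _).2 (hx y)
  have hsum1 : ∑ i, χ (a i) = 1 := by rw [← map_sum, hsum, map_one]
  obtain ⟨j, hj⟩ : ∃ j, χ (a j) ≠ 0 := by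
    by_contra h
    push_neg at h
    rw [Finset.sum_eq_zero (fun i _ => h i)] at hsum1
    exact zero_ne_one hsum1
  have hterm : χ (β j x x) = 0 := by
    have hnn : ∀ i ∈ Finset.univ, (0 : ℂ) ≤ χ (a i) * χ (β i x x) := fun i _ =>
      mul_nonneg (HIP.char_nonneg 𝔪 (ha i)) (HIP.char_nonneg 𝔪 (hpos i x))
    have h2 := (Finset.sum_eq_zero_iff_of_nonneg hnn).1 (hx0 x) j (Finset.mem_univ j)
    rcases mul_eq_zero.mp h2 with h | h
    · exact absurd h hj
    · exact h
  -- Cauchy–Schwarz at the character: `χ (β j y x) = 0` for all `y`.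
  have hCS : ∀ y, χ (β j y x) = 0 := by
    intro y
    by_contra hz
    set z : ℂ := χ (β j y x) with hzdef
    set r : ℝ := (χ (β j y y)).re with hrdef
    have hr : 0 ≤ r := (Complex.le_def.mp (HIP.char_nonneg 𝔪 (hpos j y))).1
    set t : ℝ := (r + 1) / (2 * Complex.normSq z) with htdef
    set c : ℂ := -(t : ℂ) * z with hcdef
    set ct : A := algebraMap ℂ A c with hctdef
    set u : M := y + ct • x with hudef
    have hchi_ct : χ ct = c := by
      simpa using AlgHomClass.commutes χ c
    have hchi_stct : χ (star ct) = starRingEnd ℂ c := by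
      rw [hχdef, HIP.char_star, ← hχdef, hchi_ct]
    have hexp : χ (β j u u) =
        χ (β j y y) + (starRingEnd ℂ c) * z + c * (starRingEnd ℂ z) := by
      have e1 : β j u u = β j y u + ct * β j x u := by
        calc β j u u = β j (ct • x + y) u := by rw [hudef, add_comm]
        _ = ct * β j x u + β j y u := hlin j ct x y u
        _ = β j y u + ct * β j x u := by ring
      have e2 : β j y u = β j y y + star ct * β j y x := by
        rw [hudef, form_add_right (hlin j) (hsym j), form_smul_right (hlin j) (hsym j)]
      have e3 : β j x u = β j x y + star ct * β j x x := by
        rw [hudef, form_add_right (hlin j) (hsym j), form_smul_right (hlin j) (hsym j)]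
      have e4 : χ (β j x y) = starRingEnd ℂ z := by
        rw [hsym j y x, hχdef, HIP.char_star, ← hχdef, ← hzdef]
      rw [e1, map_add, map_mul, e2, e3, map_add, map_add, map_mul, map_mul,
        hchi_stct, hchi_ct, e4, hterm, ← hzdef]
      ring
    have hval : χ (β j u u) = χ (β j y y) - ((2 * t * Complex.normSq z : ℝ) : ℂ) := by
      have h1 : (starRingEnd ℂ) c = -(t : ℂ) * (starRingEnd ℂ) z := by
        simp [hcdef]
      rw [hexp, h1, hcdef]
      push_cast
      linear_combination (-2 * (t : ℂ)) * Complex.mul_conj z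
    have hnn := HIP.char_nonneg 𝔪 (hpos j u)
    rw [hval] at hnn
    have hre := (Complex.le_def.mp hnn).1
    simp only [Complex.zero_re, Complex.sub_re, Complex.ofReal_re, ← hrdef] at hre
    have hnsq : Complex.normSq z ≠ 0 := by simpa [Complex.normSq_eq_zero] using hz
    have hposq : 0 < Complex.normSq z :=
      lt_of_le_of_ne (Complex.normSq_nonneg z) (Ne.symm hnsq)
    have ht2 : 2 * t * Complex.normSq z = r + 1 := by
      rw [htdef]; field_simp
    rw [ht2] at hre
    linarith
  -- conclude `x ∈ 𝔪 • ⊤` using finite generation and projectivity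
  have hmem : ∀ y, β j y x ∈ 𝔪 := fun y => (hker _).1 (hCS y)
  obtain ⟨n, π, hπ⟩ := Module.Finite.exists_fin' (R := A) (M := M)
  obtain ⟨s, hs⟩ := Module.projective_lifting_property π LinearMap.id hπ
  have hsy : ∀ y : M, π (s y) = y := fun y => by
    simpa using LinearMap.congr_fun hs y
  set m : Fin n → A := fun t => β j (π (Pi.single t 1)) x with hmdef
  have hmmem : ∀ t, m t ∈ 𝔪 := fun t => hmem _
  have hrep : ∀ t : Fin n, ∃ w : M, ∀ y, s y t = β j y w := fun t =>
    ((hriesz j ((LinearMap.proj t).comp s)).exists).imp fun w hw => hw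
  choose w hw using hrep
  set x' : M := ∑ t, star (m t) • w t with hx'def
  have hxx : ∀ y, β j y x = β j y x' := by
    intro y
    have hy1 : β j y x = ∑ t, s y t * m t := by
      have e : β j (π (∑ t, (s y t) • (Pi.single t 1 : Fin n → A))) x
          = ∑ t, s y t * m t := by
        rw [map_sum]
        show (lf (β j) (hlin j) x) (∑ t, π ((s y t) • (Pi.single t 1 : Fin n → A)))
            = ∑ t, s y t * m t
        rw [map_sum]
        refine Finset.sum_congr rfl fun t _ => ?_
        rw [map_smul, map_smul, smul_eq_mul]
        rfl
      rw [← e, ← HIP.pi_decomp (s y), hsy y]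
    have hy2 : β j y x' = ∑ t, s y t * m t := by
      rw [hx'def, form_sum_right (hlin j) (hsym j)]
      refine Finset.sum_congr rfl fun t _ => ?_
      rw [form_smul_right (hlin j) (hsym j), star_star, ← hw t y, mul_comm]
    rw [hy1, hy2]
  have hxeq : x = x' := by
    obtain ⟨u, _, huniq⟩ := hriesz j (lf (β j) (hlin j) x)
    have h1 : x = u := huniq x fun y => rfl
    have h2 : x' = u := huniq x' fun y => hxx y
    rw [h1, h2]
  rw [hxeq, hx'def]
  exact Submodule.sum_mem _ fun t _ =>
    Submodule.smul_mem_smul (HIP.star_mem_maximal hm (hmmem t)) Submodule.mem_top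

/-- Mod-`𝔪` surjectivity of an endomorphism of a f.g. module which is injective mod `𝔪`. -/
lemma HIP.quotient_surj {A : Type*} [CommRing A] {M : Type*} [AddCommGroup M] [Module A M]
    [Module.Finite A M] (T : M →ₗ[A] M) (𝔪 : Ideal A) [hm : 𝔪.IsMaximal]
    (hinj : ∀ x : M, T x ∈ (𝔪 • ⊤ : Submodule A M) → x ∈ (𝔪 • ⊤ : Submodule A M)) :
    ∀ x : M, ∃ y, x - T y ∈ (𝔪 • ⊤ : Submodule A M) := by
  classical
  letI : Field (A ⧸ 𝔪) := Ideal.Quotient.field 𝔪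
  haveI : IsScalarTower A (A ⧸ 𝔪) (M ⧸ (𝔪 • ⊤ : Submodule A M)) := by
    refine ⟨fun b c v => ?_⟩
    obtain ⟨r, rfl⟩ := Ideal.Quotient.mk_surjective c
    obtain ⟨x, rfl⟩ := Submodule.Quotient.mk_surjective _ v
    show ((b • Ideal.Quotient.mk 𝔪 r) • Submodule.Quotient.mk x : M ⧸ (𝔪 • ⊤ : Submodule A M))
        = b • (Ideal.Quotient.mk 𝔪 r • Submodule.Quotient.mk x)
    rw [show b • Ideal.Quotient.mk 𝔪 r = Ideal.Quotient.mk 𝔪 (b * r) from rfl,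
      Module.Quotient.mk_smul_mk, Module.Quotient.mk_smul_mk,
      show b • (Submodule.Quotient.mk (r • x) : M ⧸ (𝔪 • ⊤ : Submodule A M))
        = Submodule.Quotient.mk (b • r • x) from (Submodule.Quotient.mk_smul _ _ _).symm,
      mul_smul]
  haveI : Module.Finite (A ⧸ 𝔪) (M ⧸ (𝔪 • ⊤ : Submodule A M)) :=
    Module.Finite.of_restrictScalars_finite A _ _
  have hle : (𝔪 • ⊤ : Submodule A M) ≤ (𝔪 • ⊤ : Submodule A M).comap T := by
    rw [← Submodule.map_le_iff_le_comap, Submodule.map_smul'']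
    exact Submodule.smul_mono le_rfl le_top
  set f0 := Submodule.mapQ (𝔪 • ⊤ : Submodule A M) (𝔪 • ⊤ : Submodule A M) T hle with hf0
  set f : (M ⧸ (𝔪 • ⊤ : Submodule A M)) →ₗ[A ⧸ 𝔪] (M ⧸ (𝔪 • ⊤ : Submodule A M)) :=
    { toFun := f0
      map_add' := map_add f0
      map_smul' := by
        intro c v
        obtain ⟨r, rfl⟩ := Ideal.Quotient.mk_surjective c
        obtain ⟨x, rfl⟩ := Submodule.Quotient.mk_surjective _ v
        show f0 (Ideal.Quotient.mk 𝔪 r • Submodule.Quotient.mk x)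
            = Ideal.Quotient.mk 𝔪 r • f0 (Submodule.Quotient.mk x)
        rw [Module.Quotient.mk_smul_mk, hf0, Submodule.mapQ_apply, Submodule.mapQ_apply,
          map_smul, ← Module.Quotient.mk_smul_mk] } with hf
  have hfinj : Function.Injective f := by
    intro v v' hvv'
    have h0 : ∀ u : M ⧸ (𝔪 • ⊤ : Submodule A M), f u = 0 → u = 0 := by
      intro u hu
      obtain ⟨x, rfl⟩ := Submodule.Quotient.mk_surjective _ u
      have : f0 (Submodule.Quotient.mk x) = 0 := hu
      rw [hf0, Submodule.mapQ_apply, Submodule.Quotient.mk_eq_zero] at this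
      rw [Submodule.Quotient.mk_eq_zero]
      exact hinj x this
    have := h0 (v - v') (by rw [map_sub, hvv', sub_self])
    rwa [sub_eq_zero] at this
  have hfsurj : Function.Surjective f := LinearMap.surjective_of_injective hfinj
  intro x
  obtain ⟨v, hv⟩ := hfsurj (Submodule.Quotient.mk x)
  obtain ⟨y, rfl⟩ := Submodule.Quotient.mk_surjective _ v
  refine ⟨y, ?_⟩
  have : f0 (Submodule.Quotient.mk y) = Submodule.Quotient.mk x := hv
  rw [hf0, Submodule.mapQ_apply] at this
  have h1 := (Submodule.Quotient.eq (𝔪 • ⊤ : Submodule A M)).mp this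
  simpa using Submodule.neg_mem _ h1

/-- Nakayama: an endomorphism of a f.g. module surjective mod every maximal ideal is surjective. -/
lemma HIP.surjective_of_fiber {A : Type*} [CommRing A] {M : Type*} [AddCommGroup M] [Module A M]
    [Module.Finite A M] (T : M →ₗ[A] M)
    (h : ∀ (𝔪 : Ideal A), 𝔪.IsMaximal → ∀ x : M, ∃ y, x - T y ∈ (𝔪 • ⊤ : Submodule A M)) :
    Function.Surjective T := by
  classical
  by_contra hne
  have hrange : LinearMap.range T ≠ ⊤ := fun h' => hne (LinearMap.range_eq_top.mp h')
  have hann : Submodule.annihilator (⊤ : Submodule A (M ⧸ LinearMap.range T)) ≠ ⊤ := by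
    intro h'
    rw [Submodule.annihilator_eq_top_iff] at h'
    refine hrange (Submodule.Quotient.subsingleton_iff.mp ?_)
    refine ⟨fun c c' => ?_⟩
    have hc : c ∈ (⊥ : Submodule A (M ⧸ LinearMap.range T)) := h' ▸ Submodule.mem_top
    have hc' : c' ∈ (⊥ : Submodule A (M ⧸ LinearMap.range T)) := h' ▸ Submodule.mem_top
    rw [Submodule.mem_bot] at hc hc'
    rw [hc, hc']
  obtain ⟨𝔪, hmax, hle⟩ := Ideal.exists_le_maximal _ hann
  haveI := hmax
  have hsub : (⊤ : Submodule A (M ⧸ LinearMap.range T)) ≤ 𝔪 • ⊤ := by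
    rintro c -
    obtain ⟨x, rfl⟩ := Submodule.Quotient.mk_surjective _ c
    obtain ⟨y, hy⟩ := h 𝔪 hmax x
    have h1 : (Submodule.Quotient.mk x : M ⧸ LinearMap.range T)
        = Submodule.Quotient.mk (x - T y) := by
      rw [Submodule.Quotient.eq]
      simpa using LinearMap.mem_range_self T y
    rw [h1]
    have h2 : (Submodule.Quotient.mk (x - T y) : M ⧸ LinearMap.range T)
        ∈ Submodule.map (LinearMap.range T).mkQ (𝔪 • ⊤ : Submodule A M) := ⟨_, hy, rfl⟩
    rw [Submodule.map_smul''] at h2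
    exact Submodule.smul_mono le_rfl le_top h2
  obtain ⟨r, hr1, hr0⟩ := Submodule.exists_sub_one_mem_and_smul_eq_zero_of_fg_of_le_smul 𝔪 ⊤
    (Module.finite_def.mp inferInstance) hsub
  have hrm : r ∈ 𝔪 := hle (Submodule.mem_annihilator.mpr hr0)
  have h1 : (1 : A) ∈ 𝔪 := by simpa using 𝔪.sub_mem hrm hr1
  exact hmax.ne_top ((Ideal.eq_top_iff_one 𝔪).mpr h1)

/-- A positive definite `A`-hermitian inner product on an `A`-module `M`. -/
def IsHermitianInnerProduct (A : Type*) [CommRing A] [StarRing A] [PartialOrder A]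
    (M : Type*) [AddCommGroup M] [Module A M] (α : M → M → A) : Prop :=
  (∀ (a : A) (x y z : M), α (a • x + y) z = a * α x z + α y z) ∧
  (∀ x y : M, α y x = star (α x y)) ∧
  (∀ x : M, 0 ≤ α x x) ∧
  (∀ φ : M →ₗ[A] A, ∃! x : M, ∀ y : M, φ y = α y x)

/-- A combination `γ (x, y) = ∑ a_i β_i (x, y)` of positive definite `A`-hermitian
inner products on a finitely generated projective module, with positive coefficients
`a_i` summing to `1`, is again a positive definite `A`-hermitian inner product. -/
theorem hermitian_inner_product_partition_of_unity_combination
    (A : Type*) [NormedCommRing A] [StarRing A] [CStarRing A] [NormedAlgebra ℂ A]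
    [StarModule ℂ A] [CompleteSpace A] [PartialOrder A] [StarOrderedRing A]
    (M : Type*) [AddCommGroup M] [Module A M]
    [Module.Finite A M] [Module.Projective A M]
    (k : ℕ) (β : Fin k → M → M → A)
    (hβ : ∀ i, IsHermitianInnerProduct A M (β i))
    (a : Fin k → A) (ha : ∀ i, 0 ≤ a i) (hsum : ∑ i, a i = 1) :
    IsHermitianInnerProduct A M (fun x y => ∑ i, a i * β i x y) := by
  classical
  open HIP in
  have hlin : ∀ i (b : A) (x y z : M), β i (b • x + y) z = b * β i x z + β i y z :=
    fun i => (hβ i).1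
  have hsym : ∀ i (x y : M), β i y x = star (β i x y) := fun i => (hβ i).2.1
  have hpos : ∀ i (x : M), 0 ≤ β i x x := fun i => (hβ i).2.2.1
  have hriesz : ∀ i (φ : M →ₗ[A] A), ∃! x : M, ∀ y : M, φ y = β i y x :=
    fun i => (hβ i).2.2.2
  have Hlin : ∀ (b : A) (x y z : M),
      (∑ i, a i * β i (b • x + y) z) = b * (∑ i, a i * β i x z) + ∑ i, a i * β i y z := by
    intro b x y z
    calc ∑ i, a i * β i (b • x + y) z
        = ∑ i, (b * (a i * β i x z) + a i * β i y z) :=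
          Finset.sum_congr rfl fun i _ => by rw [hlin i]; ring
      _ = b * (∑ i, a i * β i x z) + ∑ i, a i * β i y z := by
          rw [Finset.sum_add_distrib, Finset.mul_sum]
  have Hsym : ∀ x y : M, (∑ i, a i * β i y x) = star (∑ i, a i * β i x y) := by
    intro x y
    rw [star_sum]
    refine Finset.sum_congr rfl fun i _ => ?_
    rw [star_mul', (IsSelfAdjoint.of_nonneg (ha i)).star_eq, ← hsym i]
  refine ⟨Hlin, Hsym,
    fun x => Finset.sum_nonneg fun i _ => HIP.mul_nonneg' (ha i) (hpos i x), ?_⟩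
  intro φ
  rcases Nat.eq_zero_or_pos k with hk | hk
  · subst hk
    simp only [Finset.univ_eq_empty, Finset.sum_empty] at hsum
    haveI : Subsingleton A := subsingleton_of_zero_eq_one hsum
    have hM : ∀ m : M, m = 0 := fun m => by
      calc m = (1 : A) • m := (one_smul A m).symm
        _ = (0 : A) • m := by rw [Subsingleton.elim (1 : A) (0 : A)]
        _ = 0 := zero_smul A m
    exact ⟨0, fun y => Subsingleton.elim _ _, fun w _ => hM w⟩
  · set i₀ : Fin k := ⟨0, hk⟩ with hi₀
    set γ : M → M → A := fun x y => ∑ i, a i * β i x y with hγ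
    have hTex : ∀ x : M, ∃ z : M, ∀ y, γ y x = β i₀ y z := fun x =>
      ((hriesz i₀ (HIP.lf γ Hlin x)).exists).imp fun z hz => hz
    choose T hT using hTex
    have binj : ∀ (i : Fin k) (w w' : M), (∀ y, β i y w = β i y w') → w = w' := by
      intro i w w' hww'
      obtain ⟨u, _, huniq⟩ := hriesz i (HIP.lf (β i) (hlin i) w)
      have h1 : w = u := huniq w fun y => rfl
      have h2 : w' = u := huniq w' fun y => hww' y
      rw [h1, h2]
    have Tadd : ∀ x x', T (x + x') = T x + T x' := by
      intro x x'
      refine binj i₀ _ _ fun y => ?_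
      calc β i₀ y (T (x + x')) = γ y (x + x') := (hT (x + x') y).symm
        _ = γ y x + γ y x' := HIP.form_add_right Hlin Hsym x x' y
        _ = β i₀ y (T x) + β i₀ y (T x') := by rw [hT x y, hT x' y]
        _ = β i₀ y (T x + T x') := (HIP.form_add_right (hlin i₀) (hsym i₀) _ _ _).symm
    have Tsmul : ∀ (b : A) (x : M), T (b • x) = b • T x := by
      intro b x
      refine binj i₀ _ _ fun y => ?_
      calc β i₀ y (T (b • x)) = γ y (b • x) := (hT _ y).symm
        _ = star b * γ y x := HIP.form_smul_right Hlin Hsym b x y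
        _ = star b * β i₀ y (T x) := by rw [hT x y]
        _ = β i₀ y (b • T x) := (HIP.form_smul_right (hlin i₀) (hsym i₀) b _ y).symm
    set Tl : M →ₗ[A] M :=
      { toFun := T, map_add' := Tadd, map_smul' := fun b x => by simpa using Tsmul b x }
      with hTl
    have hstep1 : ∀ (𝔪 : Ideal A), 𝔪.IsMaximal → ∀ x : M,
        Tl x ∈ (𝔪 • ⊤ : Submodule A M) → x ∈ (𝔪 • ⊤ : Submodule A M) := by
      intro 𝔪 hm x hx
      haveI := hm
      refine HIP.fiber_mem hlin hsym hpos hriesz ha hsum 𝔪 x fun y => ?_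
      rw [show (∑ i, a i * β i y x) = β i₀ y (Tl x) from hT x y]
      exact HIP.form_mem_of_mem_smul_top (hlin i₀) (hsym i₀)
        (fun b hb => HIP.star_mem_maximal hm hb) hx y
    have hsurj : Function.Surjective Tl :=
      HIP.surjective_of_fiber Tl fun 𝔪 hm x => by
        haveI := hm
        exact HIP.quotient_surj Tl 𝔪 (hstep1 𝔪 hm) x
    have hinj : Function.Injective Tl :=
      OrzechProperty.injective_of_surjective_endomorphism Tl hsurj
    obtain ⟨z, hz, hzuniq⟩ := hriesz i₀ φ
    obtain ⟨x, hxz⟩ := hsurj z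
    refine ⟨x, fun y => ?_, fun w hw => ?_⟩
    · show φ y = γ y x
      rw [hT x y, show T x = z from hxz]
      exact hz y
    · apply hinj
      rw [hxz]
      refine hzuniq (Tl w) fun y => ?_
      have hwy : φ y = γ y w := hw y
      rw [hwy]
      exact hT w y
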